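/- In the group G_n (n ≥ 1) defined by gluing surface groups H_i along boundary curves via d_j^{t_j} = c_{j+1}, there is no free product decomposition G_n = K * L with a_0, b_0, c_0 ∈ K and a_n, b_n, c_n ∈ L. -/

import Mathlib

/-- Generators of `Gₙ`: quadruples `aᵢ, bᵢ, cᵢ, dᵢ` for `0 ≤ i ≤ n`
(encoded as `Fin (n+1) × Fin 4`) together with stable letters `tⱼ` for `0 ≤ j ≤ n-1`. -/
def GGen (n : ℕ) : Type := (Fin (n + 1) × Fin 4) ⊕ Fin n

open scoped commutatorElement

/-- The relations of `Gₙ`: `cᵢ dᵢ [aᵢ, bᵢ] = 1` for `0 ≤ i ≤ n` and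
`tⱼ⁻¹ dⱼ tⱼ = c_{j+1}` for `0 ≤ j ≤ n - 1`. -/
def GRels (n : ℕ) : Set (FreeGroup (GGen n)) :=
  {r | (∃ i : Fin (n + 1),
          r = FreeGroup.of ((Sum.inl (i, 2)) : GGen n) * FreeGroup.of ((Sum.inl (i, 3)) : GGen n) *
              ⁅FreeGroup.of ((Sum.inl (i, 0)) : GGen n), FreeGroup.of ((Sum.inl (i, 1)) : GGen n)⁆) ∨
       (∃ j : Fin n,
          r = (FreeGroup.of ((Sum.inr j) : GGen n))⁻¹ * FreeGroup.of ((Sum.inl (j.castSucc, 3)) : GGen n) *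
              FreeGroup.of ((Sum.inr j) : GGen n) * (FreeGroup.of ((Sum.inl (j.succ, 2)) : GGen n))⁻¹)}

/-- The group `Gₙ`, obtained by gluing the surface groups
`Hᵢ = ⟨cᵢ, dᵢ, aᵢ, bᵢ ∣ cᵢ dᵢ [aᵢ, bᵢ] = 1⟩`, `0 ≤ i ≤ n`,
along boundary curves via `dⱼ^{tⱼ} = c_{j+1}`, `0 ≤ j ≤ n-1`. -/
abbrev GGrp (n : ℕ) : Type := PresentedGroup (GRels n)

/-- The generator `aᵢ` of `Gₙ`. -/
def Ga (n : ℕ) (i : Fin (n + 1)) : GGrp n := PresentedGroup.of ((Sum.inl (i, 0)) : GGen n)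

/-- The generator `bᵢ` of `Gₙ`. -/
def Gb (n : ℕ) (i : Fin (n + 1)) : GGrp n := PresentedGroup.of ((Sum.inl (i, 1)) : GGen n)

/-- The generator `cᵢ` of `Gₙ`. -/
def Gc (n : ℕ) (i : Fin (n + 1)) : GGrp n := PresentedGroup.of ((Sum.inl (i, 2)) : GGen n)

/-- The generator `dᵢ` of `Gₙ`. -/
def Gd (n : ℕ) (i : Fin (n + 1)) : GGrp n := PresentedGroup.of ((Sum.inl (i, 3)) : GGen n)

/-- The stable letter `tⱼ` of `Gₙ`. -/
def Gt (n : ℕ) (j : Fin n) : GGrp n := PresentedGroup.of ((Sum.inr j) : GGen n)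

/-- The canonical copy of the surface group `Hᵢ` inside `Gₙ`,
generated by `aᵢ, bᵢ, cᵢ, dᵢ`. -/
def Hsub (n : ℕ) (i : Fin (n + 1)) : Subgroup (GGrp n) :=
  Subgroup.closure {Ga n i, Gb n i, Gc n i, Gd n i}

/-- `G` is the internal free product of its subgroups `A` and `B`. -/
def IsFreeProd {G : Type*} [Group G] (A B : Subgroup G) : Prop :=
  Function.Bijective (Monoid.Coprod.lift A.subtype B.subtype)

/-- `A` is a free factor of `G`. -/
def IsFreeFactor {G : Type*} [Group G] (A : Subgroup G) : Prop :=
  ∃ B : Subgroup G, IsFreeProd A B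

/-- `G` is the internal free product of its subgroups `A`, `B` and `C`. -/
def IsFreeProd3 {G : Type*} [Group G] (A B C : Subgroup G) : Prop :=
  Function.Bijective (Monoid.CoprodI.lift (fun i : Fin 3 => (![A, B, C] i).subtype))

-- relator holds in GGrp
theorem Grel_one {n : ℕ} {r : FreeGroup (GGen n)} (hr : r ∈ GRels n) :
    PresentedGroup.mk (GRels n) r = 1 := by
  have : r ∈ Subgroup.normalClosure (GRels n) := Subgroup.subset_normalClosure hr
  exact (QuotientGroup.eq_one_iff r).mpr this

theorem Grel1 {n : ℕ} (i : Fin (n + 1)) :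
    Gc n i * Gd n i * ⁅Ga n i, Gb n i⁆ = 1 := by
  have := Grel_one (n := n) (r := FreeGroup.of ((Sum.inl (i, 2)) : GGen n) * FreeGroup.of ((Sum.inl (i, 3)) : GGen n) *
              ⁅FreeGroup.of ((Sum.inl (i, 0)) : GGen n), FreeGroup.of ((Sum.inl (i, 1)) : GGen n)⁆)
    (Or.inl ⟨i, rfl⟩)
  exact this

theorem Grel2 {n : ℕ} (j : Fin n) :
    (Gt n j)⁻¹ * Gd n j.castSucc * Gt n j * (Gc n j.succ)⁻¹ = 1 := by
  have := Grel_one (n := n) (r := (FreeGroup.of ((Sum.inr j) : GGen n))⁻¹ * FreeGroup.of ((Sum.inl (j.castSucc, 3)) : GGen n) *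
              FreeGroup.of ((Sum.inr j) : GGen n) * (FreeGroup.of ((Sum.inl (j.succ, 2)) : GGen n))⁻¹)
    (Or.inr ⟨j, rfl⟩)
  exact this

-- consequences for homs into Multiplicative ℤ
theorem psi_cd {n : ℕ} (ψ : GGrp n →* Multiplicative ℤ) (i : Fin (n + 1)) :
    Multiplicative.toAdd (ψ (Gc n i)) + Multiplicative.toAdd (ψ (Gd n i)) = 0 := by
  have h := congrArg Multiplicative.toAdd (congrArg ψ (Grel1 (n := n) i))
  simp only [commutatorElement_def, map_mul, map_inv, map_one, toAdd_mul, toAdd_inv,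
    toAdd_one] at h
  omega

theorem psi_dc {n : ℕ} (ψ : GGrp n →* Multiplicative ℤ) (j : Fin n) :
    Multiplicative.toAdd (ψ (Gd n j.castSucc)) = Multiplicative.toAdd (ψ (Gc n j.succ)) := by
  have h := congrArg Multiplicative.toAdd (congrArg ψ (Grel2 (n := n) j))
  simp only [map_mul, map_inv, map_one, toAdd_mul, toAdd_inv, toAdd_one] at h
  omega

-- chain lemma
theorem psi_chain {n : ℕ} (ψ : GGrp n →* Multiplicative ℤ) :
    ∀ m (hm : m ≤ n), Multiplicative.toAdd (ψ (Gc n ⟨m, Nat.lt_succ_of_le hm⟩)) =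
      (-1 : ℤ) ^ m * Multiplicative.toAdd (ψ (Gc n 0)) := by
  intro m
  induction m with
  | zero => intro hm; simp [Fin.mk_zero]
  | succ m ih =>
    intro hm
    have hm' : m < n := hm
    have hmn : m ≤ n := le_of_lt hm'
    set j : Fin n := ⟨m, hm'⟩ with hj
    have h1 : (⟨m + 1, Nat.lt_succ_of_le hm⟩ : Fin (n+1)) = j.succ := rfl
    have h2 : (⟨m, Nat.lt_succ_of_le hmn⟩ : Fin (n+1)) = j.castSucc := rfl
    have e1 := psi_dc ψ j
    have e2 := psi_cd ψ j.castSucc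
    have e3 := ih hmn
    rw [h2] at e3
    rw [h1, ← e1]
    rw [pow_succ]
    nlinarith [e1, e2, e3]

-- the abelianizing character
def fgen (n : ℕ) : GGen n → Multiplicative ℤ
  | Sum.inl (i, k) => Multiplicative.ofAdd
      ((if k = 2 then (-1 : ℤ) ^ (i : ℕ) else 0) + (if k = 3 then -(-1 : ℤ) ^ (i : ℕ) else 0))
  | Sum.inr _ => 1

theorem fgen_rels (n : ℕ) : ∀ r ∈ GRels n, FreeGroup.lift (fgen n) r = 1 := by
  rintro r (⟨i, rfl⟩ | ⟨j, rfl⟩)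
  · have : ∀ x y : Multiplicative ℤ, ⁅x, y⁆ = 1 := fun x y => by
      rw [commutatorElement_def, mul_comm x y]; group
    show FreeGroup.lift (fgen n) (FreeGroup.of (α := GGen n) (Sum.inl (i, 2)) * FreeGroup.of (α := GGen n) (Sum.inl (i, 3)) *
      ⁅FreeGroup.of (α := GGen n) (Sum.inl (i, 0)), FreeGroup.of (α := GGen n) (Sum.inl (i, 1))⁆) = 1
    simp only [map_mul, map_commutatorElement, this, mul_one]
    erw [FreeGroup.lift_apply_of, FreeGroup.lift_apply_of]
    simp only [fgen]
    rw [← ofAdd_add, ← ofAdd_zero]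
    congr 1
    simp
  · show FreeGroup.lift (fgen n) ((FreeGroup.of (α := GGen n) (Sum.inr j))⁻¹ * FreeGroup.of (α := GGen n) (Sum.inl (j.castSucc, 3)) *
      FreeGroup.of (α := GGen n) (Sum.inr j) * (FreeGroup.of (α := GGen n) (Sum.inl (j.succ, 2)))⁻¹) = 1
    simp only [map_mul, map_inv]
    erw [FreeGroup.lift_apply_of, FreeGroup.lift_apply_of, FreeGroup.lift_apply_of]
    simp only [fgen]
    rw [inv_one, one_mul, mul_one, ← ofAdd_neg, ← ofAdd_add, ← ofAdd_zero]
    congr 1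
    have h1 : ((j.castSucc : Fin (n+1)) : ℕ) = (j : ℕ) := rfl
    have h2 : ((j.succ : Fin (n+1)) : ℕ) = (j : ℕ) + 1 := rfl
    simp [h1, h2, pow_succ]

def phi (n : ℕ) : GGrp n →* Multiplicative ℤ := PresentedGroup.toGroup (fgen_rels n)

theorem phi_c (n : ℕ) (i : Fin (n + 1)) :
    Multiplicative.toAdd (phi n (Gc n i)) = (-1 : ℤ) ^ (i : ℕ) := by
  show Multiplicative.toAdd (PresentedGroup.toGroup (fgen_rels n) (PresentedGroup.of (rels := GRels n) (Sum.inl (i, 2)))) = _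
  erw [PresentedGroup.toGroup.of]
  simp [fgen]

theorem no_free_decomposition_separating_ends_aux (n : ℕ) (hn : 1 ≤ n) :
    ¬ ∃ K L : Subgroup (GGrp n), IsFreeProd K L ∧
        Ga n 0 ∈ K ∧ Gb n 0 ∈ K ∧ Gc n 0 ∈ K ∧
        Ga n (Fin.last n) ∈ L ∧ Gb n (Fin.last n) ∈ L ∧ Gc n (Fin.last n) ∈ L := by
  rintro ⟨K, L, hKL, -, -, hc0, -, -, hcn⟩
  set F := Monoid.Coprod.lift K.subtype L.subtype with hF
  set e := MulEquiv.ofBijective F hKL with he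
  set χ : GGrp n →* Multiplicative ℤ :=
    (Monoid.Coprod.lift ((phi n).comp K.subtype) 1).comp e.symm.toMonoidHom with hχ
  have hχK : ∀ x, ∀ hx : x ∈ K, χ x = phi n x := by
    intro x hx
    have hsymm : e.symm x = Monoid.Coprod.inl ⟨x, hx⟩ := by
      rw [MulEquiv.symm_apply_eq]
      show F (Monoid.Coprod.inl ⟨x, hx⟩) = x
      rw [hF, Monoid.Coprod.lift_apply_inl]
      rfl
    simp [hχ, hsymm, Monoid.Coprod.lift_apply_inl]
  have hχL : ∀ x, ∀ hx : x ∈ L, χ x = 1 := by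
    intro x hx
    have hsymm : e.symm x = Monoid.Coprod.inr ⟨x, hx⟩ := by
      rw [MulEquiv.symm_apply_eq]
      show F (Monoid.Coprod.inr ⟨x, hx⟩) = x
      rw [hF, Monoid.Coprod.lift_apply_inr]
      rfl
    simp [hχ, hsymm, Monoid.Coprod.lift_apply_inr]
  have h0 : Multiplicative.toAdd (χ (Gc n 0)) = 1 := by
    rw [hχK _ hc0]
    have := phi_c n 0
    simpa using this
  have hlast : Multiplicative.toAdd (χ (Gc n (Fin.last n))) = 0 := by
    rw [hχL _ hcn]; rfl
  have hchain := psi_chain χ n le_rfl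
  have hl : (⟨n, Nat.lt_succ_of_le le_rfl⟩ : Fin (n+1)) = Fin.last n := rfl
  rw [hl, hlast, h0, mul_one] at hchain
  have := pow_ne_zero n (by norm_num : (-1 : ℤ) ≠ 0)
  exact this hchain.symm

/-- There is no free product decomposition `Gₙ = K * L` with `a₀, b₀, c₀ ∈ K` and
`aₙ, bₙ, cₙ ∈ L`. -/
theorem no_free_decomposition_separating_ends (n : ℕ) (hn : 1 ≤ n) :
    ¬ ∃ K L : Subgroup (GGrp n), IsFreeProd K L ∧
        Ga n 0 ∈ K ∧ Gb n 0 ∈ K ∧ Gc n 0 ∈ K ∧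
        Ga n (Fin.last n) ∈ L ∧ Gb n (Fin.last n) ∈ L ∧ Gc n (Fin.last n) ∈ L := by
  exact no_free_decomposition_separating_ends_aux n hn
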